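/- For every finite set P ⊆ ℝ², the Semi-Yao graph SYG(P) is a supergraph of the nearest neighbor graph NNG(P): every directed edge of NNG(P) is a directed edge of SYG(P). -/

import Mathlib

/- Common geometric setup: the Euclidean plane, wedges `W_l`, bisectors `b_l`,
equilateral triangles `∆_l` and `l`-tri's, circular sectors `σ_l` and `l`-pies,
and the proximity graphs (Semi-Yao, nearest-neighbor, Equilateral/Pie Delaunay,
Yao) together with Euclidean minimum spanning trees. -/

open Real EuclideanGeometry
open scoped RealInnerProductSpace

noncomputable section

abbrev E : Type := EuclideanSpace ℝ (Fin 2)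

/-- The point `(a, b)` in the Euclidean plane. -/
def pt (a b : ℝ) : E := (WithLp.equiv 2 (Fin 2 → ℝ)).symm ![a, b]

/-- The unit vector at polar angle `θ`. -/
def dir (θ : ℝ) : E := pt (Real.cos θ) (Real.sin θ)

/-- The lower boundary angle `(2l-1)π/6` of the `l`-th wedge. -/
def lo (l : Fin 6) : ℝ := (2 * ((l : ℕ) : ℝ) - 1) * π / 6

/-- The upper boundary angle `(2l+1)π/6` of the `l`-th wedge. -/
def hi (l : Fin 6) : ℝ := (2 * ((l : ℕ) : ℝ) + 1) * π / 6

/-- The half-open wedge `W_l`: all nonzero points whose polar angle (mod `2π`)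
lies in `[(2l-1)π/6, (2l+1)π/6)`. -/
def wedge (l : Fin 6) : Set E :=
  {x | x ≠ 0 ∧ ∃ θ : ℝ, lo l ≤ θ ∧ θ < hi l ∧ x = ‖x‖ • dir θ}

/-- `W_l(p)`, the translate of `W_l` with apex `p`. -/
def wedgeAt (l : Fin 6) (p : E) : Set E := {x | x - p ∈ wedge l}

/-- The unit bisector vector `b_l = (cos(lπ/3), sin(lπ/3))` of `W_l`. -/
def bvec (l : Fin 6) : E := dir (((l : ℕ) : ℝ) * π / 3)

/-- `V_l(p) = P ∩ W_l(p)`. -/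
def Vl (P : Finset E) (l : Fin 6) (p : E) : Set E := {x | x ∈ P ∧ x ∈ wedgeAt l p}

/-- The closed equilateral triangle `∆_l` with vertices `0`, `dir ((2l-1)π/6)`,
`dir ((2l+1)π/6)`. -/
def tri (l : Fin 6) : Set E := convexHull ℝ {0, dir (lo l), dir (hi l)}

/-- The vertex set of `∆_l`. -/
def triVerts (l : Fin 6) : Set E := {0, dir (lo l), dir (hi l)}

/-- The `l`-tri `c + lam • ∆_l`. -/
def lTri (l : Fin 6) (c : E) (lam : ℝ) : Set E := (fun x => c + lam • x) '' tri l

/-- The closed circular sector (piece of pie) `σ_l` of the unit disk. -/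
def sector (l : Fin 6) : Set E :=
  {x | ‖x‖ ≤ 1 ∧ (x = 0 ∨ ∃ θ : ℝ, lo l ≤ θ ∧ θ ≤ hi l ∧ x = ‖x‖ • dir θ)}

/-- The `l`-pie `c + lam • σ_l`. -/
def lPie (l : Fin 6) (c : E) (lam : ℝ) : Set E := (fun x => c + lam • x) '' sector l

/-- Directed Semi-Yao graph edge from `a` to `b`: `a ∈ V_l(b)` for some `l` and `a`
has the minimum `b_l`-coordinate among the points of `V_l(b)`. -/
def SYG (P : Finset E) (a b : E) : Prop :=
  b ∈ P ∧ ∃ l : Fin 6, a ∈ Vl P l b ∧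
    ∀ r ∈ Vl P l b, ⟪a - b, bvec l⟫ ≤ ⟪r - b, bvec l⟫

/-- Undirected Semi-Yao graph edge. -/
def SYGu (P : Finset E) (p q : E) : Prop := SYG P p q ∨ SYG P q p

/-- Directed nearest-neighbor graph edge from `a` to `b`: `b ∈ P \ {a}` and
`‖a - b‖ = min_{r ∈ P \ {a}} ‖a - r‖`. -/
def NNG (P : Finset E) (a b : E) : Prop :=
  a ∈ P ∧ b ∈ P ∧ b ≠ a ∧ ∀ r ∈ P, r ≠ a → ‖a - b‖ ≤ ‖a - r‖

/-- Edge of the Equilateral Delaunay triangulation `EDT_l(P)`: there is an `l`-tri,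
empty with respect to `P`, with both endpoints on its boundary. -/
def EDT (P : Finset E) (l : Fin 6) (p q : E) : Prop :=
  p ∈ P ∧ q ∈ P ∧ p ≠ q ∧ ∃ c : E, ∃ lam : ℝ, 0 < lam ∧
    p ∈ frontier (lTri l c lam) ∧ q ∈ frontier (lTri l c lam) ∧
    ∀ r ∈ P, r ∉ interior (lTri l c lam)

/-- Edge of the Equilateral Delaunay graph `EDG(P) = EDT_0(P) ∪ EDT_1(P)`. -/
def EDG (P : Finset E) (p q : E) : Prop := EDT P 0 p q ∨ EDT P 1 p q

/-- Directed Yao-graph edge from `p` to `q`: `q ∈ V_l(p)` for some `l` and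
`‖p - q‖ = min_{r ∈ V_l(p)} ‖p - r‖`. -/
def YG (P : Finset E) (p q : E) : Prop :=
  p ∈ P ∧ ∃ l : Fin 6, q ∈ Vl P l p ∧ ∀ r ∈ Vl P l p, ‖p - q‖ ≤ ‖p - r‖

/-- Edge of the Pie Delaunay triangulation `PDT_l(P)`: there is an `l`-pie, empty
with respect to `P`, with both endpoints on its boundary. -/
def PDT (P : Finset E) (l : Fin 6) (p q : E) : Prop :=
  p ∈ P ∧ q ∈ P ∧ p ≠ q ∧ ∃ c : E, ∃ lam : ℝ, 0 < lam ∧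
    p ∈ frontier (lPie l c lam) ∧ q ∈ frontier (lPie l c lam) ∧
    ∀ r ∈ P, r ∉ interior (lPie l c lam)

/-- Edge of the Pie Delaunay graph `PDG(P) = PDT_0(P) ∪ ⋯ ∪ PDT_5(P)`. -/
def PDG (P : Finset E) (p q : E) : Prop := ∃ l : Fin 6, PDT P l p q

/-- Total Euclidean edge weight of a graph on the points of `P`. -/
def edgeWeight (P : Finset E) (G : SimpleGraph {x // x ∈ P}) : ℝ :=
  ∑ e ∈ G.edgeSet.toFinite.toFinset,
    Sym2.lift ⟨fun (a b : {x // x ∈ P}) => ‖(a : E) - (b : E)‖,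
      fun _ _ => norm_sub_rev _ _⟩ e

/-- `T` is a Euclidean minimum spanning tree of `P`: a spanning tree (connected and
acyclic graph on the vertex set `P`) of minimum total Euclidean edge weight. -/
def IsEMST (P : Finset E) (T : SimpleGraph {x // x ∈ P}) : Prop :=
  T.IsTree ∧ ∀ G : SimpleGraph {x // x ∈ P}, G.IsTree → edgeWeight P T ≤ edgeWeight P G


lemma inner_dir (θ φ : ℝ) : ⟪dir θ, dir φ⟫ = Real.cos (θ - φ) := by
  simp [dir, pt, PiLp.inner_apply, RCLike.inner_apply, Fin.sum_univ_two, Real.cos_sub,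
    WithLp.equiv_symm_apply, PiLp.toLp_apply, mul_comm]

lemma eq_pt (v : E) : v = pt (v 0) (v 1) := by
  ext i
  fin_cases i <;> rfl

lemma exists_polar (v : E) (hv : v ≠ 0) :
    ∃ θ : ℝ, -(π/6) ≤ θ ∧ θ < 11 * π / 6 ∧ v = ‖v‖ • dir θ := by
  set z : ℂ := ⟨v 0, v 1⟩ with hz
  have hz0 : z ≠ 0 := by
    intro h
    apply hv
    have h0 : v 0 = 0 := congrArg Complex.re h
    have h1 : v 1 = 0 := congrArg Complex.im h
    rw [eq_pt v, h0, h1]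
    ext i; fin_cases i <;> simp [pt, WithLp.equiv_symm_apply, PiLp.toLp_apply]
  have habs : ‖z‖ = ‖v‖ := by
    rw [Complex.norm_def, Complex.normSq_mk, EuclideanSpace.norm_eq, Fin.sum_univ_two]
    simp [sq_abs, sq]
  have habs0 : ‖z‖ ≠ 0 := by simpa using hz0
  have hrep : ∀ θ : ℝ, Real.cos θ = (v 0) / ‖v‖ → Real.sin θ = (v 1) / ‖v‖ →
      v = ‖v‖ • dir θ := by
    intro θ hc hs
    have hn0 : ‖v‖ ≠ 0 := by rwa [← habs]
    ext i
    fin_cases i <;>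
      simp [dir, pt, WithLp.equiv_symm_apply, PiLp.toLp_apply, hc, hs, mul_div_cancel₀, hn0]
  have hcos : Real.cos (Complex.arg z) = (v 0) / ‖v‖ := by
    rw [Complex.cos_arg hz0, habs]
  have hsin : Real.sin (Complex.arg z) = (v 1) / ‖v‖ := by
    rw [Complex.sin_arg, habs]
  by_cases hcase : -(π/6) ≤ Complex.arg z
  · refine ⟨Complex.arg z, hcase, ?_, hrep _ hcos hsin⟩
    have := Complex.arg_le_pi z
    linarith [Real.pi_pos]
  · refine ⟨Complex.arg z + 2*π, ?_, ?_, hrep _ ?_ ?_⟩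
    · have := Complex.neg_pi_lt_arg z
      linarith [Real.pi_pos]
    · push_neg at hcase
      linarith
    · rw [Real.cos_add_two_pi]; exact hcos
    · rw [Real.sin_add_two_pi]; exact hsin

lemma exists_wedge (v : E) (hv : v ≠ 0) : ∃ l : Fin 6, v ∈ wedge l := by
  obtain ⟨θ, h1, h2, h3⟩ := exists_polar v hv
  have hπ := Real.pi_pos
  set k : ℤ := ⌊(θ + π/6) * 3 / π⌋ with hk
  have hk0 : 0 ≤ k := by
    apply Int.floor_nonneg.mpr
    have h6 : (0:ℝ) ≤ θ + π/6 := by linarith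
    positivity
  have hk6 : k < 6 := by
    apply Int.floor_lt.mpr
    rw [div_lt_iff₀ hπ]
    push_cast
    linarith
  have hfl : (k : ℝ) ≤ (θ + π/6) * 3 / π := Int.floor_le _
  have hfu : (θ + π/6) * 3 / π < k + 1 := Int.lt_floor_add_one _
  rw [le_div_iff₀ hπ] at hfl
  rw [div_lt_iff₀ hπ] at hfu
  have hkn : ((k.toNat : ℕ) : ℝ) = (k : ℝ) := by
    exact_mod_cast congrArg (fun n : ℤ => (n : ℝ)) (Int.toNat_of_nonneg hk0)
  refine ⟨⟨k.toNat, by omega⟩, hv, θ, ?_, ?_, h3⟩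
  · show (2 * ((k.toNat : ℕ) : ℝ) - 1) * π / 6 ≤ θ
    rw [hkn]
    linarith
  · show θ < (2 * ((k.toNat : ℕ) : ℝ) + 1) * π / 6
    rw [hkn]
    linarith

lemma wedge_decomp (l : Fin 6) (x : E) (hx : x ∈ wedge l) :
    x ≠ 0 ∧ ∃ β : ℝ, -(π/6) ≤ β ∧ β < π/6 ∧
      x = ‖x‖ • dir (((l : ℕ) : ℝ) * π / 3 + β) ∧
      ⟪x, bvec l⟫ = ‖x‖ * Real.cos β := by
  obtain ⟨hx0, θ, h1, h2, h3⟩ := hx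
  set c : ℝ := ((l : ℕ) : ℝ) * π / 3 with hc
  have hlo : lo l = c - π/6 := by rw [lo, hc]; ring
  have hhi : hi l = c + π/6 := by rw [hi, hc]; ring
  refine ⟨hx0, θ - c, by linarith [hlo ▸ h1], by linarith [hhi ▸ h2], ?_, ?_⟩
  · have he : c + (θ - c) = θ := by ring
    rw [he]
    exact h3
  · rw [bvec, ← hc]
    nth_rewrite 1 [h3]
    rw [real_inner_smul_left, inner_dir, h3]

/-- the Semi-Yao graph is a supergraph of the nearest neighbor graph:
every directed edge of `NNG(P)` is a directed edge of `SYG(P)`. -/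
theorem semiYao_supergraph_of_nearestNeighborGraph
    (P : Finset E) (p q : E) (h : NNG P p q) : SYG P p q := by
  obtain ⟨hp, hq, hqp, hmin⟩ := h
  have hπ := Real.pi_pos
  have hx0 : p - q ≠ 0 := sub_ne_zero.mpr hqp.symm
  obtain ⟨l, hl⟩ := exists_wedge (p - q) hx0
  refine ⟨hq, l, ⟨hp, hl⟩, ?_⟩
  intro r hr
  by_contra hlt
  push_neg at hlt
  obtain ⟨_, α, hα1, hα2, hxe, hxi⟩ := wedge_decomp l (p - q) hl
  obtain ⟨hy0, β, hβ1, hβ2, hye, hyi⟩ := wedge_decomp l (r - q) hr.2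
  set s : ℝ := ‖p - q‖ with hs
  set t : ℝ := ‖r - q‖ with ht
  have hspos : 0 < s := norm_pos_iff.mpr hx0
  have htpos : 0 < t := norm_pos_iff.mpr hy0
  rw [hxi, hyi] at hlt
  -- hlt : t * cos β < s * cos α
  have hrp : r ≠ p := by
    rintro rfl
    have := hyi.symm.trans hxi
    linarith
  -- inner product between the two vectors
  have hinner : ⟪p - q, r - q⟫ = s * t * Real.cos (α - β) := by
    nth_rewrite 1 [hxe]
    nth_rewrite 1 [hye]
    rw [real_inner_smul_left, real_inner_smul_right, inner_dir]
    have e : ((l : ℕ) : ℝ) * π / 3 + α - (((l : ℕ) : ℝ) * π / 3 + β) = α - β := by ring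
    rw [e]
    ring
  have hcosβ : 0 < Real.cos β :=
    Real.cos_pos_of_mem_Ioo ⟨by linarith, by linarith⟩
  have hcos2 : 0 < Real.cos (α - 2*β) :=
    Real.cos_pos_of_mem_Ioo ⟨by linarith, by linarith⟩
  have hid : Real.cos α + Real.cos (α - 2*β) = 2 * Real.cos (α - β) * Real.cos β := by
    have key : Real.cos ((α - β) + β) + Real.cos ((α - β) - β)
        = 2 * Real.cos (α - β) * Real.cos β := by
      have c1 := Real.cos_add (α - β) β
      have c2 := Real.cos_sub (α - β) β
      linarith
    have ea : (α - β) + β = α := by ring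
    have eb : (α - β) - β = α - 2*β := by ring
    rw [ea, eb] at key
    linarith
  have h1 : t < 2 * s * Real.cos (α - β) := by
    have hchain : t * Real.cos β < 2 * s * Real.cos (α - β) * Real.cos β := by
      nlinarith [mul_pos hspos hcos2]
    exact lt_of_mul_lt_mul_right (by linarith [hchain]) (le_of_lt hcosβ)
  have hnormsq : ‖p - r‖ ^ 2 = s^2 + t^2 - 2 * (s * t * Real.cos (α - β)) := by
    have hpr : p - r = (p - q) - (r - q) := by abel
    rw [hpr, norm_sub_sq_real, hinner, ← hs, ← ht]
    ring
  have h2 : ‖p - r‖ ^ 2 < s ^ 2 := by nlinarith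
  have h3 : ‖p - r‖ < s := by nlinarith [norm_nonneg (p - r)]
  have := hmin r hr.1 hrp
  linarith
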